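/- Let GL(n,ℤ) → GL(n,ℤ/2) be the map induced by reduction mod 2. This map is surjective. -/

import Mathlib

open Matrix

lemma transvection_unit {n : ℕ} (i j : Fin n) (hij : i ≠ j) (c : ℤ) :
    IsUnit (Matrix.transvection i j c) := by
  apply IsUnit.of_mul_eq_one (Matrix.transvection i j (-c))
  rw [Matrix.transvection_mul_transvection_same _ _ hij, add_neg_cancel,
    Matrix.transvection_zero]

lemma map_transvection {n : ℕ} (i j : Fin n) (c : ℤ) :
    (Int.castRingHom (ZMod 2)).mapMatrix (Matrix.transvection i j c) =
      Matrix.transvection i j ((c : ZMod 2)) := by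
  ext a b
  simp [Matrix.transvection, Matrix.single, Matrix.one_apply]

/-- The reduction-mod-2 map `GL(n, ℤ) → GL(n, ℤ/2)` is surjective. -/
theorem stmt_0 (n : ℕ) :
    Function.Surjective
      (Units.map (((Int.castRingHom (ZMod 2)).mapMatrix :
          Matrix (Fin n) (Fin n) ℤ →+* Matrix (Fin n) (Fin n) (ZMod 2)).toMonoidHom)) := by
  intro u
  set f := ((Int.castRingHom (ZMod 2)).mapMatrix :
      Matrix (Fin n) (Fin n) ℤ →+* Matrix (Fin n) (Fin n) (ZMod 2))
  suffices h : ∃ M : (Matrix (Fin n) (Fin n) ℤ)ˣ, f (↑M) = (↑u : Matrix (Fin n) (Fin n) (ZMod 2)) by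
    obtain ⟨M, hM⟩ := h
    exact ⟨M, Units.ext hM⟩
  have hdet : det (↑u : Matrix (Fin n) (Fin n) (ZMod 2)) ≠ 0 :=
    (Matrix.isUnits_det_units u).ne_zero
  apply Matrix.diagonal_transvection_induction_of_det_ne_zero
    (fun N => ∃ M : (Matrix (Fin n) (Fin n) ℤ)ˣ, f (↑M) = N) _ hdet
  · intro D hD
    have hD1 : ∀ i, D i = 1 := by
      intro i
      have hne : D i ≠ 0 := by
        intro h
        apply hD
        rw [Matrix.det_diagonal]
        exact Finset.prod_eq_zero (Finset.mem_univ i) h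
      have h2 : ∀ x : ZMod 2, x ≠ 0 → x = 1 := by decide
      exact h2 _ hne
    have : D = fun _ => 1 := funext hD1
    refine ⟨1, ?_⟩
    rw [this, Matrix.diagonal_one, Units.val_one, _root_.map_one]
  · intro t
    obtain ⟨v, hv⟩ := transvection_unit t.i t.j t.hij (t.c.val : ℤ)
    refine ⟨v, ?_⟩
    rw [hv]
    show ((Int.castRingHom (ZMod 2)).mapMatrix) _ = _
    rw [map_transvection]
    simp [Matrix.TransvectionStruct.toMatrix]
  · rintro A B _ _ ⟨M, hM⟩ ⟨N, hN⟩
    exact ⟨M * N, by rw [Units.val_mul, _root_.map_mul, hM, hN]⟩
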